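/- There exist δ0 > 0 and n0 ∈ ℕ such that the following holds for all 0 < δ ≤ δ0 and n ≥ n0. Assume the Setup and assume |D̄| ≤ 8δn. Then for every i ∈ {1,2} and every vertex v ∈ V_i, |N_G(v) ∩ D_i| ≤ 11√δ·n. -/

import Mathlib

open SimpleGraph

/-- The number of triangles (copies of `K₃`) in a graph `G`, i.e. `N(K₃, G)`. -/
noncomputable def triangleCount {V : Type*} (G : SimpleGraph V) : ℕ :=
  Set.ncard {s : Finset V | G.IsNClique 3 s}

/-- `G` contains a subgraph isomorphic to `H`. -/
def Contains {W V : Type*} (H : SimpleGraph W) (G : SimpleGraph V) : Prop :=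
  ∃ f : H →g G, Function.Injective f

/-- `G` is `H`-free: it contains no subgraph isomorphic to `H`. -/
def Free {W V : Type*} (H : SimpleGraph W) (G : SimpleGraph V) : Prop :=
  ¬ Contains H G

/-- The expansion `F^△` of a graph `F`: each edge `uv` of `F` is replaced by a triangle
`u v w_{uv}` where the new vertices `w_{uv}` are pairwise distinct and outside `V(F)`. -/
def expansion {V : Type*} (F : SimpleGraph V) : SimpleGraph (V ⊕ F.edgeSet) :=
  SimpleGraph.fromRel (fun a b =>
    (∃ u v, a = Sum.inl u ∧ b = Sum.inl v ∧ F.Adj u v) ∨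
    (∃ u, ∃ e : F.edgeSet, a = Sum.inl u ∧ b = Sum.inr e ∧ u ∈ (e : Sym2 V)))

/-- `C₄^△`, the expansion of the 4-edge cycle: a graph on 8 vertices. -/
def C4expansion : SimpleGraph ((Fin 4) ⊕ (SimpleGraph.cycleGraph 4).edgeSet) :=
  expansion (SimpleGraph.cycleGraph 4)

/-- The generalized Turán number `ex(n, K₃, H)`: the maximum number of triangles in an
`H`-free graph on `n` vertices. -/
noncomputable def exTriangles (n : ℕ) {W : Type*} (H : SimpleGraph W) : ℕ :=
  sSup {k | ∃ G : SimpleGraph (Fin n), _root_.Free H G ∧ triangleCount G = k}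

/-- `T(n)`: the complete bipartite graph on `Fin n` with parts
`X = {v : v < ⌊n/2⌋}` (of size `⌊n/2⌋`) and `Y = {v : v ≥ ⌊n/2⌋}` (of size `⌈n/2⌉`). -/
def Tgraph (n : ℕ) : SimpleGraph (Fin n) :=
  SimpleGraph.fromRel (fun u v => u.val < n / 2 ∧ n / 2 ≤ v.val)

/-- `T⁺(n)`: the graph `T(n)` with one extra edge (between vertices `0` and `1`) added
inside the part `X`. -/
def TgraphPlus (n : ℕ) : SimpleGraph (Fin n) :=
  SimpleGraph.fromRel (fun u v =>
    (u.val < n / 2 ∧ n / 2 ≤ v.val) ∨ (u.val = 0 ∧ v.val = 1))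

/-- `T⁼(n)`: the graph obtained from `T(n)` by adding the edge `e₁ = {0,1}` inside `X`,
adding the edge `e₂ = {⌊n/2⌋, ⌊n/2⌋+1}` inside `Y`, and deleting the perfect matching
`{0,⌊n/2⌋}, {1,⌊n/2⌋+1}` between the endpoints of `e₁` and of `e₂`. -/
def TgraphEq (n : ℕ) : SimpleGraph (Fin n) :=
  SimpleGraph.fromRel (fun u v =>
    (u.val < n / 2 ∧ n / 2 ≤ v.val ∧
      ¬(u.val = 0 ∧ v.val = n / 2) ∧ ¬(u.val = 1 ∧ v.val = n / 2 + 1))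
    ∨ (u.val = 0 ∧ v.val = 1) ∨ (u.val = n / 2 ∧ v.val = n / 2 + 1))

/-- The join `K₁ ⋈ H` of a single new vertex with the graph `H`. -/
def joinK1 {V : Type*} (H : SimpleGraph V) : SimpleGraph (Option V) :=
  SimpleGraph.fromRel (fun u v =>
    u = none ∨ ∃ a b, u = some a ∧ v = some b ∧ H.Adj a b)

/-- `S(n) = K₁ ⋈ T(n-1)`. -/
def Sgraph (n : ℕ) : SimpleGraph (Option (Fin (n - 1))) := joinK1 (Tgraph (n - 1))

/-- `S⁺(n) = K₁ ⋈ T⁺(n-1)`. -/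
def SgraphPlus (n : ℕ) : SimpleGraph (Option (Fin (n - 1))) := joinK1 (TgraphPlus (n - 1))

/-- `S⁼(n) = K₁ ⋈ T⁼(n-1)`. -/
def SgraphEq (n : ℕ) : SimpleGraph (Option (Fin (n - 1))) := joinK1 (TgraphEq (n - 1))

/-- `d_G(uv)`: the number of triangles of `G` containing the edge `uv`, i.e. the number of
common neighbors of `u` and `v`. -/
noncomputable def edgeTriangleDeg {V : Type*} (G : SimpleGraph V) (u v : V) : ℕ :=
  {w : V | G.Adj u w ∧ G.Adj v w}.ncard

/-- `e_G(A, B)`: the number of edges of `G` with one endpoint in `A` and the other in `B`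
(for disjoint `A`, `B`). -/
noncomputable def crossEdges {V : Type*} (G : SimpleGraph V) (A B : Set V) : ℕ :=
  {p : V × V | p.1 ∈ A ∧ p.2 ∈ B ∧ G.Adj p.1 p.2}.ncard



lemma cyc4_adj : ∀ i j : Fin 4, (cycleGraph 4).Adj i j ↔
    ((i = 0 ∧ j = 1) ∨ (i = 1 ∧ j = 0) ∨ (i = 1 ∧ j = 2) ∨ (i = 2 ∧ j = 1) ∨
     (i = 2 ∧ j = 3) ∨ (i = 3 ∧ j = 2) ∨ (i = 3 ∧ j = 0) ∨ (i = 0 ∧ j = 3)) := by decide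

lemma mem_edges4 : ∀ i j : Fin 4, (cycleGraph 4).Adj i j →
    (s(i,j) = s((0:Fin 4),(1:Fin 4)) ∨ s(i,j) = s((1:Fin 4),(2:Fin 4)) ∨
     s(i,j) = s((2:Fin 4),(3:Fin 4)) ∨ s(i,j) = s((3:Fin 4),(0:Fin 4))) := by decide

lemma edge_cases4 (e : (cycleGraph 4).edgeSet) :
    e.1 = s((0:Fin 4),(1:Fin 4)) ∨ e.1 = s((1:Fin 4),(2:Fin 4)) ∨
    e.1 = s((2:Fin 4),(3:Fin 4)) ∨ e.1 = s((3:Fin 4),(0:Fin 4)) := by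
  obtain ⟨ev, he⟩ := e
  induction ev using Sym2.ind with
  | _ a b => exact mem_edges4 a b he

lemma containsC4exp {V : Type*} (G : SimpleGraph V)
    (c0 c1 c2 c3 w0 w1 w2 w3 : V)
    (h01 : G.Adj c0 c1) (h12 : G.Adj c1 c2) (h23 : G.Adj c2 c3) (h30 : G.Adj c3 c0)
    (hw0a : G.Adj w0 c0) (hw0b : G.Adj w0 c1)
    (hw1a : G.Adj w1 c1) (hw1b : G.Adj w1 c2)
    (hw2a : G.Adj w2 c2) (hw2b : G.Adj w2 c3)
    (hw3a : G.Adj w3 c3) (hw3b : G.Adj w3 c0)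
    (d02 : c0 ≠ c2) (d13 : c1 ≠ c3)
    (e02 : w0 ≠ c2) (e03 : w0 ≠ c3) (e13 : w1 ≠ c3) (e10 : w1 ≠ c0)
    (e20 : w2 ≠ c0) (e21 : w2 ≠ c1) (e31 : w3 ≠ c1) (e32 : w3 ≠ c2)
    (f01 : w0 ≠ w1) (f02 : w0 ≠ w2) (f03 : w0 ≠ w3)
    (f12 : w1 ≠ w2) (f13 : w1 ≠ w3) (f23 : w2 ≠ w3) :
    Contains C4expansion G := by
  classical
  set cf : Fin 4 → V := fun i => if i = 0 then c0 else if i = 1 then c1 else if i = 2 then c2 else c3 with hcf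
  set wf : Sym2 (Fin 4) → V := fun s => if s = s(0,1) then w0 else if s = s(1,2) then w1 else if s = s(2,3) then w2 else w3 with hwf
  have cf0 : cf 0 = c0 := by simp [hcf]
  have cf1 : cf 1 = c1 := by simp [hcf]
  have cf2 : cf 2 = c2 := by simp [hcf]
  have cf3 : cf 3 = c3 := by simp [hcf]
  have wf0 : wf s(0,1) = w0 := by simp [hwf]
  have wf1 : wf s(1,2) = w1 := by simp [hwf]
  have wf2 : wf s(2,3) = w2 := by simp [hwf]
  have wf3 : wf s(3,0) = w3 := by simp [hwf]
  have n01 : c0 ≠ c1 := h01.ne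
  have n12 : c1 ≠ c2 := h12.ne
  have n23 : c2 ≠ c3 := h23.ne
  have n30 : c3 ≠ c0 := h30.ne
  have g00 : w0 ≠ c0 := hw0a.ne
  have g01 : w0 ≠ c1 := hw0b.ne
  have g11 : w1 ≠ c1 := hw1a.ne
  have g12 : w1 ≠ c2 := hw1b.ne
  have g22 : w2 ≠ c2 := hw2a.ne
  have g23 : w2 ≠ c3 := hw2b.ne
  have g33 : w3 ≠ c3 := hw3a.ne
  have g30 : w3 ≠ c0 := hw3b.ne
  have hcc : ∀ i j : Fin 4, (cycleGraph 4).Adj i j → G.Adj (cf i) (cf j) := by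
    intro i j h
    rcases (cyc4_adj i j).1 h with ⟨hi,hj⟩|⟨hi,hj⟩|⟨hi,hj⟩|⟨hi,hj⟩|⟨hi,hj⟩|⟨hi,hj⟩|⟨hi,hj⟩|⟨hi,hj⟩ <;>
      subst hi <;> subst hj <;> simp only [cf0, cf1, cf2, cf3]
    exacts [h01, h01.symm, h12, h12.symm, h23, h23.symm, h30, h30.symm]
  have hcw : ∀ (i : Fin 4) (e : (cycleGraph 4).edgeSet), i ∈ e.1 → G.Adj (cf i) (wf e.1) := by
    intro i e hm
    rcases edge_cases4 e with he|he|he|he <;> rw [he] at hm ⊢ <;>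
      rcases Sym2.mem_iff.mp hm with hi|hi <;> subst hi <;>
      simp only [wf0, wf1, wf2, wf3, cf0, cf1, cf2, cf3]
    exacts [hw0a.symm, hw0b.symm, hw1a.symm, hw1b.symm, hw2a.symm, hw2b.symm, hw3a.symm, hw3b.symm]
  have hfin : ∀ i : Fin 4, i = 0 ∨ i = 1 ∨ i = 2 ∨ i = 3 := by decide
  refine ⟨⟨Sum.elim cf (fun e => wf e.1), ?_⟩, ?_⟩
  · intro a b hab
    simp only [C4expansion, expansion, fromRel_adj] at hab
    obtain ⟨hne, h | h⟩ := hab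
    · rcases h with ⟨u,v,hu,hv,huv⟩|⟨u,e,hu,hv,hm⟩ <;> subst hu <;> subst hv
      · exact hcc u v huv
      · exact hcw u e hm
    · rcases h with ⟨u,v,hu,hv,huv⟩|⟨u,e,hu,hv,hm⟩ <;> subst hu <;> subst hv
      · exact (hcc u v huv).symm
      · exact (hcw u e hm).symm
  · intro a b hfab
    cases a with
    | inl i =>
      cases b with
      | inl j =>
        replace hfab : cf i = cf j := hfab
        have hij : i = j := by
          rcases hfin i with hi|hi|hi|hi <;> rcases hfin j with hj|hj|hj|hj <;>
            subst hi <;> subst hj <;>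
            simp only [cf0, cf1, cf2, cf3] at hfab <;>
            first
              | rfl
              | exact absurd hfab n01 | exact absurd hfab.symm n01
              | exact absurd hfab n12 | exact absurd hfab.symm n12
              | exact absurd hfab n23 | exact absurd hfab.symm n23
              | exact absurd hfab n30 | exact absurd hfab.symm n30
              | exact absurd hfab d02 | exact absurd hfab.symm d02
              | exact absurd hfab d13 | exact absurd hfab.symm d13
        rw [hij]
      | inr e =>
        exfalso
        replace hfab : cf i = wf e.1 := hfab
        rcases hfin i with hi|hi|hi|hi <;> subst hi <;>
          rcases edge_cases4 e with he|he|he|he <;> rw [he] at hfab <;>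
          simp only [cf0, cf1, cf2, cf3, wf0, wf1, wf2, wf3] at hfab <;>
          first
            | exact absurd hfab.symm g00 | exact absurd hfab.symm g01
            | exact absurd hfab.symm e02 | exact absurd hfab.symm e03
            | exact absurd hfab.symm e10 | exact absurd hfab.symm g11
            | exact absurd hfab.symm g12 | exact absurd hfab.symm e13
            | exact absurd hfab.symm e20 | exact absurd hfab.symm e21
            | exact absurd hfab.symm g22 | exact absurd hfab.symm g23
            | exact absurd hfab.symm g30 | exact absurd hfab.symm e31
            | exact absurd hfab.symm e32 | exact absurd hfab.symm g33
    | inr e =>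
      cases b with
      | inl i =>
        exfalso
        replace hfab : wf e.1 = cf i := hfab
        rcases hfin i with hi|hi|hi|hi <;> subst hi <;>
          rcases edge_cases4 e with he|he|he|he <;> rw [he] at hfab <;>
          simp only [cf0, cf1, cf2, cf3, wf0, wf1, wf2, wf3] at hfab <;>
          first
            | exact absurd hfab g00 | exact absurd hfab g01
            | exact absurd hfab e02 | exact absurd hfab e03
            | exact absurd hfab e10 | exact absurd hfab g11
            | exact absurd hfab g12 | exact absurd hfab e13
            | exact absurd hfab e20 | exact absurd hfab e21
            | exact absurd hfab g22 | exact absurd hfab g23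
            | exact absurd hfab g30 | exact absurd hfab e31
            | exact absurd hfab e32 | exact absurd hfab g33
      | inr e' =>
        replace hfab : wf e.1 = wf e'.1 := hfab
        rcases edge_cases4 e with he|he|he|he <;> rcases edge_cases4 e' with he'|he'|he'|he' <;>
          rw [he, he'] at hfab <;>
          simp only [wf0, wf1, wf2, wf3] at hfab <;>
          first
            | exact congrArg Sum.inr (Subtype.ext (he.trans he'.symm))
            | exact absurd hfab f01 | exact absurd hfab.symm f01
            | exact absurd hfab f02 | exact absurd hfab.symm f02
            | exact absurd hfab f03 | exact absurd hfab.symm f03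
            | exact absurd hfab f12 | exact absurd hfab.symm f12
            | exact absurd hfab f13 | exact absurd hfab.symm f13
            | exact absurd hfab f23 | exact absurd hfab.symm f23


lemma crossEdges_comm {V : Type*} (G : SimpleGraph V) (A B : Set V) :
    crossEdges G A B = crossEdges G B A := by
  unfold crossEdges
  have : {p : V × V | p.1 ∈ B ∧ p.2 ∈ A ∧ G.Adj p.1 p.2}
      = Prod.swap '' {p : V × V | p.1 ∈ A ∧ p.2 ∈ B ∧ G.Adj p.1 p.2} := by
    ext ⟨a, b⟩
    simp only [Set.mem_setOf_eq, Set.mem_image, Prod.exists, Prod.swap_prod_mk, Prod.mk.injEq]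
    constructor
    · rintro ⟨ha, hb, hadj⟩; exact ⟨b, a, ⟨hb, ha, hadj.symm⟩, rfl, rfl⟩
    · rintro ⟨p, q, ⟨hp, hq, hadj⟩, rfl, rfl⟩; exact ⟨hq, hp, hadj.symm⟩
  rw [this, Set.ncard_image_of_injective _ Prod.swap_injective]


lemma ncard_sprod {α β : Type*} [Fintype α] [Fintype β] (s : Set α) (t : Set β) :
    (s ×ˢ t).ncard = s.ncard * t.ncard := by
  rw [← Nat.card_coe_set_eq, ← Nat.card_coe_set_eq, ← Nat.card_coe_set_eq,
    Nat.card_congr (Equiv.Set.prod s t), Nat.card_prod]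

set_option maxHeartbeats 1000000 in
lemma main_aux {n : ℕ} (hn : 2000 ≤ n) {δ : ℝ} (hδ : 0 < δ)
    (G : SimpleGraph (Fin n)) (hfree : _root_.Free C4expansion G)
    (x : Fin n) (V1 V2 : Set (Fin n))
    (hdisj : Disjoint V1 V2) (hunion : V1 ∪ V2 = ({x}ᶜ : Set (Fin n)))
    (hmax : ∀ W1 W2 : Set (Fin n), Disjoint W1 W2 → W1 ∪ W2 = ({x}ᶜ : Set (Fin n)) →
      crossEdges G W1 W2 ≤ crossEdges G V1 V2)
    (hcross : (n : ℝ) ^ 2 / 4 - 2 * δ * (n : ℝ) ^ 2 ≤ (crossEdges G V1 V2 : ℝ))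
    (D : Set (Fin n))
    (hD : D = {u : Fin n | u ≠ x ∧ G.Adj u x ∧ (n : ℝ) / 200 ≤ (edgeTriangleDeg G u x : ℝ)})
    (v : Fin n) (hv : v ∈ V1) :
    ((G.neighborSet v ∩ (D ∩ V1)).ncard : ℝ) ≤ 11 * Real.sqrt δ * n := by
  classical
  have hnR : (2000 : ℝ) ≤ (n : ℝ) := by exact_mod_cast hn
  have hn0 : (0:ℝ) ≤ (n:ℝ) := by positivity
  have hxV1 : x ∉ V1 := by
    intro hx
    have : x ∈ V1 ∪ V2 := Or.inl hx
    rw [hunion] at this; exact this rfl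
  have hxV2 : x ∉ V2 := by
    intro hx
    have : x ∈ V1 ∪ V2 := Or.inr hx
    rw [hunion] at this; exact this rfl
  have hvx : v ≠ x := by rintro rfl; exact hxV1 hv
  have hvV2 : v ∉ V2 := fun h => Set.disjoint_left.mp hdisj hv h
  -- cardinality of the parts
  have hcard : V1.ncard + V2.ncard = n - 1 := by
    have h1 := Set.ncard_union_eq hdisj (Set.toFinite _) (Set.toFinite _)
    rw [hunion] at h1
    have h2 := Set.ncard_add_ncard_compl ({x} : Set (Fin n)) (Set.toFinite _) (Set.toFinite _)
    simp only [Set.ncard_singleton, Nat.card_eq_fintype_card, Fintype.card_fin] at h2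
    omega
  -- cross edges + non-edges = |V1|*|V2|
  set CS : Set (Fin n × Fin n) := {p | p.1 ∈ V1 ∧ p.2 ∈ V2 ∧ G.Adj p.1 p.2} with hCS
  set NE : Set (Fin n × Fin n) := {p | p.1 ∈ V1 ∧ p.2 ∈ V2 ∧ ¬ G.Adj p.1 p.2} with hNE
  have hCSval : crossEdges G V1 V2 = CS.ncard := rfl
  have hsplit : crossEdges G V1 V2 + NE.ncard = V1.ncard * V2.ncard := by
    have hu : CS ∪ NE = V1 ×ˢ V2 := by
      ext ⟨a, b⟩
      simp only [hCS, hNE, Set.mem_union, Set.mem_setOf_eq, Set.mem_prod]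
      by_cases h : G.Adj a b <;> tauto
    have hd : Disjoint CS NE := by
      rw [Set.disjoint_left]
      rintro ⟨a, b⟩ ⟨_, _, h⟩ ⟨_, _, h'⟩
      exact h' h
    rw [hCSval, ← Set.ncard_union_eq hd (Set.toFinite _) (Set.toFinite _), hu, ncard_sprod]
  have hcs_le : crossEdges G V1 V2 ≤ V1.ncard * V2.ncard := by omega
  -- real bounds
  have hV12R : (V1.ncard : ℝ) + (V2.ncard : ℝ) = (n : ℝ) - 1 := by
    have h1 : ((V1.ncard + V2.ncard : ℕ) : ℝ) = ((n - 1 : ℕ) : ℝ) := by rw [hcard]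
    push_cast [Nat.cast_sub (by omega : 1 ≤ n)] at h1
    linarith [h1]
  have hprodR : (V1.ncard : ℝ) * (V2.ncard : ℝ) ≤ ((n : ℝ) - 1) ^ 2 / 4 := by
    nlinarith [sq_nonneg ((V1.ncard : ℝ) - (V2.ncard : ℝ))]
  have hNER : (NE.ncard : ℝ) ≤ 2 * δ * (n : ℝ) ^ 2 := by
    have h1 : (crossEdges G V1 V2 : ℝ) + (NE.ncard : ℝ) = (V1.ncard : ℝ) * (V2.ncard : ℝ) := by
      exact_mod_cast congrArg (Nat.cast (R := ℝ)) hsplit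
    nlinarith
  have hdel : (n : ℝ) / 4 ≤ 2 * δ * (n : ℝ) ^ 2 := by
    have h2 : (crossEdges G V1 V2 : ℝ) ≤ (V1.ncard : ℝ) * (V2.ncard : ℝ) := by exact_mod_cast hcs_le
    nlinarith
  -- the triangle-apex sets
  set S : Fin n → Set (Fin n) := fun u => {z | G.Adj u z ∧ G.Adj v z ∧ z ≠ x} with hS
  set B : Set (Fin n) := G.neighborSet v ∩ (D ∩ V1) with hB
  set P : Set (Fin n) := {u | u ∈ B ∧ 3 ≤ (S u).ncard} with hPdef
  have hPsub : P ⊆ B := fun u hu => hu.1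
  -- facts about members of B
  have hBfacts : ∀ u ∈ B, G.Adj v u ∧ u ≠ x ∧ G.Adj u x ∧
      (10 : ℕ) ≤ ({w : Fin n | G.Adj u w ∧ G.Adj x w}).ncard := by
    intro u hu
    obtain ⟨hu1, hu2, _⟩ := hu
    rw [hD] at hu2
    obtain ⟨hux, huadj, hdeg⟩ := hu2
    refine ⟨hu1, hux, huadj, ?_⟩
    have h10 : (10 : ℝ) ≤ ((edgeTriangleDeg G u x : ℕ) : ℝ) := by
      have : (10 : ℝ) ≤ (n : ℝ) / 200 := by linarith
      linarith
    exact_mod_cast h10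
  -- at most one member of B has 3 or more apexes
  have hP1 : P.ncard ≤ 1 := by
    by_contra hcon
    rw [Set.ncard_le_one_iff (Set.toFinite _)] at hcon
    push_neg at hcon
    obtain ⟨u1, u2, hu1P, hu2P, hne⟩ := hcon
    obtain ⟨hu1B, hS1⟩ := hu1P
    obtain ⟨hu2B, hS2⟩ := hu2P
    obtain ⟨hvu1, hu1x, hu1adj, hA1⟩ := hBfacts u1 hu1B
    obtain ⟨hvu2, hu2x, hu2adj, hA2⟩ := hBfacts u2 hu2B
    -- pick w2 ∈ S u2 \ {u1}
    obtain ⟨w2, hw2S, hw2n⟩ := Set.exists_mem_notMem_of_ncard_lt_ncard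
      (show ({u1} : Set (Fin n)).ncard < (S u2).ncard by
        rw [Set.ncard_singleton]; omega) (Set.toFinite _)
    rw [Set.mem_singleton_iff] at hw2n
    -- pick w1 ∈ S u1 \ {u2, w2}
    obtain ⟨w1, hw1S, hw1n⟩ := Set.exists_mem_notMem_of_ncard_lt_ncard
      (show ({u2, w2} : Set (Fin n)).ncard < (S u1).ncard by
        have : ({u2, w2} : Set (Fin n)).ncard ≤ 2 := by
          refine le_trans (Set.ncard_insert_le _ _) ?_
          rw [Set.ncard_singleton]
        omega) (Set.toFinite _)
    simp only [Set.mem_insert_iff, Set.mem_singleton_iff] at hw1n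
    push_neg at hw1n
    obtain ⟨hw1u2, hw1w2⟩ := hw1n
    -- pick a1 ∈ A1 \ {v, u2, w1, w2}
    obtain ⟨a1, ha1S, ha1n⟩ := Set.exists_mem_notMem_of_ncard_lt_ncard
      (show ({v, u2, w1, w2} : Set (Fin n)).ncard < ({w : Fin n | G.Adj u1 w ∧ G.Adj x w}).ncard by
        have h4 : ({v, u2, w1, w2} : Set (Fin n)).ncard ≤ 4 := by
          refine le_trans (Set.ncard_insert_le _ _) ?_
          have := Set.ncard_insert_le u2 ({w1, w2} : Set (Fin n))
          have := Set.ncard_insert_le w1 ({w2} : Set (Fin n))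
          rw [Set.ncard_singleton] at *
          omega
        omega) (Set.toFinite _)
    simp only [Set.mem_insert_iff, Set.mem_singleton_iff] at ha1n
    push_neg at ha1n
    obtain ⟨ha1v, ha1u2, ha1w1, ha1w2⟩ := ha1n
    -- pick a2 ∈ A2 \ {v, u1, w1, w2, a1}
    obtain ⟨a2, ha2S, ha2n⟩ := Set.exists_mem_notMem_of_ncard_lt_ncard
      (show ({v, u1, w1, w2, a1} : Set (Fin n)).ncard < ({w : Fin n | G.Adj u2 w ∧ G.Adj x w}).ncard by
        have h5 : ({v, u1, w1, w2, a1} : Set (Fin n)).ncard ≤ 5 := by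
          have h1 := Set.ncard_insert_le v ({u1, w1, w2, a1} : Set (Fin n))
          have h2 := Set.ncard_insert_le u1 ({w1, w2, a1} : Set (Fin n))
          have h3 := Set.ncard_insert_le w1 ({w2, a1} : Set (Fin n))
          have h4 := Set.ncard_insert_le w2 ({a1} : Set (Fin n))
          rw [Set.ncard_singleton] at h4
          omega
        omega) (Set.toFinite _)
    simp only [Set.mem_insert_iff, Set.mem_singleton_iff] at ha2n
    push_neg at ha2n
    obtain ⟨ha2v, ha2u1, ha2w1, ha2w2, ha2a1⟩ := ha2n
    obtain ⟨hw1a, hw1b, hw1x⟩ := hw1S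
    obtain ⟨hw2a, hw2b, hw2x⟩ := hw2S
    obtain ⟨ha1a, ha1b⟩ := ha1S
    obtain ⟨ha2a, ha2b⟩ := ha2S
    exact hfree (containsC4exp G x u1 v u2 a1 w1 w2 a2
      hu1adj.symm hvu1.symm hvu2 hu2adj
      ha1b.symm ha1a.symm
      hw1a.symm hw1b.symm
      hw2b.symm hw2a.symm
      ha2a.symm ha2b.symm
      hvx.symm hne
      ha1v ha1u2 hw1u2 hw1x
      hw2x hw2n ha2u1 ha2v
      ha1w1 ha1w2 (fun h => ha2a1 h.symm)
      hw1w2 (fun h => ha2w1 h.symm) (fun h => ha2w2 h.symm))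
  -- moving v across the cut
  have hmove : (G.neighborSet v ∩ (V1 \ {v})).ncard ≤ (G.neighborSet v ∩ V2).ncard := by
    have hWd : Disjoint (V1 \ {v}) (V2 ∪ {v}) := by
      rw [Set.disjoint_union_right]
      constructor
      · exact Disjoint.mono_left Set.diff_subset hdisj
      · exact Set.disjoint_singleton_right.mpr (fun h => h.2 rfl)
    have hWu : (V1 \ {v}) ∪ (V2 ∪ {v}) = ({x}ᶜ : Set (Fin n)) := by
      rw [← hunion]
      ext z
      by_cases hz : z = v
      · subst hz; simp [hv]
      · simp [hz]
    have hle := hmax _ _ hWd hWu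
    have e1 : CS = {p : Fin n × Fin n | p.1 ∈ V1 \ {v} ∧ p.2 ∈ V2 ∧ G.Adj p.1 p.2}
        ∪ (fun z => (v, z)) '' (G.neighborSet v ∩ V2) := by
      ext ⟨a, b⟩
      simp only [hCS, Set.mem_setOf_eq, Set.mem_union, Set.mem_image, Set.mem_diff,
        Set.mem_singleton_iff, Set.mem_inter_iff, mem_neighborSet, Prod.mk.injEq]
      constructor
      · rintro ⟨ha, hb, hadj⟩
        by_cases hav : a = v
        · subst hav; exact Or.inr ⟨b, ⟨hadj, hb⟩, rfl, rfl⟩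
        · exact Or.inl ⟨⟨ha, hav⟩, hb, hadj⟩
      · rintro (⟨⟨ha, _⟩, hb, hadj⟩ | ⟨z, ⟨hz1, hz2⟩, rfl, rfl⟩)
        · exact ⟨ha, hb, hadj⟩
        · exact ⟨hv, hz2, hz1⟩
    have e2 : {p : Fin n × Fin n | p.1 ∈ V1 \ {v} ∧ p.2 ∈ V2 ∪ {v} ∧ G.Adj p.1 p.2}
        = {p : Fin n × Fin n | p.1 ∈ V1 \ {v} ∧ p.2 ∈ V2 ∧ G.Adj p.1 p.2}
        ∪ (fun z => (z, v)) '' (G.neighborSet v ∩ (V1 \ {v})) := by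
      ext ⟨a, b⟩
      simp only [Set.mem_setOf_eq, Set.mem_union, Set.mem_image, Set.mem_diff,
        Set.mem_singleton_iff, Set.mem_inter_iff, mem_neighborSet, Prod.mk.injEq]
      constructor
      · rintro ⟨ha, hb | hb, hadj⟩
        · exact Or.inl ⟨ha, hb, hadj⟩
        · subst hb; exact Or.inr ⟨a, ⟨hadj.symm, ha⟩, rfl, rfl⟩
      · rintro (⟨ha, hb, hadj⟩ | ⟨z, ⟨hz1, hz2⟩, rfl, rfl⟩)
        · exact ⟨ha, Or.inl hb, hadj⟩
        · exact ⟨hz2, Or.inr rfl, hz1.symm⟩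
    have hinj1 : Function.Injective (fun z : Fin n => (v, z)) := fun a b h => congrArg Prod.snd h
    have hinj2 : Function.Injective (fun z : Fin n => (z, v)) := fun a b h => congrArg Prod.fst h
    have hd1 : Disjoint {p : Fin n × Fin n | p.1 ∈ V1 \ {v} ∧ p.2 ∈ V2 ∧ G.Adj p.1 p.2}
        ((fun z => (v, z)) '' (G.neighborSet v ∩ V2)) := by
      rw [Set.disjoint_left]
      rintro ⟨a, b⟩ ⟨⟨_, hav⟩, _, _⟩ ⟨z, _, heq⟩
      exact hav (congrArg Prod.fst heq).symm
    have hd2 : Disjoint {p : Fin n × Fin n | p.1 ∈ V1 \ {v} ∧ p.2 ∈ V2 ∧ G.Adj p.1 p.2}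
        ((fun z => (z, v)) '' (G.neighborSet v ∩ (V1 \ {v}))) := by
      rw [Set.disjoint_left]
      rintro ⟨a, b⟩ ⟨_, hb, _⟩ ⟨z, _, heq⟩
      have : v = b := congrArg Prod.snd heq
      exact hvV2 (this ▸ hb)
    have hcalc1 : crossEdges G V1 V2
        = {p : Fin n × Fin n | p.1 ∈ V1 \ {v} ∧ p.2 ∈ V2 ∧ G.Adj p.1 p.2}.ncard
          + (G.neighborSet v ∩ V2).ncard := by
      rw [hCSval, e1, Set.ncard_union_eq hd1 (Set.toFinite _) (Set.toFinite _),
        Set.ncard_image_of_injective _ hinj1]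
    have hcalc2 : crossEdges G (V1 \ {v}) (V2 ∪ {v})
        = {p : Fin n × Fin n | p.1 ∈ V1 \ {v} ∧ p.2 ∈ V2 ∧ G.Adj p.1 p.2}.ncard
          + (G.neighborSet v ∩ (V1 \ {v})).ncard := by
      show ({p : Fin n × Fin n | p.1 ∈ V1 \ {v} ∧ p.2 ∈ V2 ∪ {v} ∧ G.Adj p.1 p.2}).ncard = _
      rw [e2, Set.ncard_union_eq hd2 (Set.toFinite _) (Set.toFinite _),
        Set.ncard_image_of_injective _ hinj2]
    rw [hcalc1, hcalc2] at hle
    omega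
  -- B is contained in the left neighborhood
  have hBsub : B ⊆ G.neighborSet v ∩ (V1 \ {v}) := by
    rintro z ⟨hz1, _, hz3⟩
    exact ⟨hz1, hz3, fun h => (hz1.ne (h ▸ rfl))⟩
  set m : ℕ := (G.neighborSet v ∩ V2).ncard with hm
  have hBm : B.ncard ≤ m := le_trans (Set.ncard_le_ncard hBsub (Set.toFinite _)) hmove
  -- non-neighbor sets
  set Z : Fin n → Set (Fin n) := fun u => {z | (z ∈ G.neighborSet v ∩ V2) ∧ ¬ G.Adj u z} with hZ
  have hZcard : ∀ u ∈ B \ P, m ≤ (Z u).ncard + 2 := by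
    intro u hu
    have hSu : (S u).ncard ≤ 2 := by
      by_contra hcon
      exact hu.2 ⟨hu.1, by omega⟩
    have hsub : (G.neighborSet v ∩ V2) ⊆ Z u ∪ S u := by
      intro z hz
      by_cases hadj : G.Adj u z
      · refine Or.inr ⟨hadj, hz.1, ?_⟩
        intro hzx
        exact hxV2 (hzx ▸ hz.2)
      · exact Or.inl ⟨hz, hadj⟩
    calc m ≤ (Z u ∪ S u).ncard := Set.ncard_le_ncard hsub (Set.toFinite _)
      _ ≤ (Z u).ncard + (S u).ncard := Set.ncard_union_le _ _
      _ ≤ (Z u).ncard + 2 := by omega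
  -- double counting non-edges
  have hcount : (B \ P).ncard * (m - 2) ≤ NE.ncard := by
    classical
    set Bf : Finset (Fin n) := (B \ P).toFinite.toFinset with hBf
    set F : Finset (Fin n × Fin n) :=
      Bf.biUnion (fun u => ((Z u).toFinite.toFinset).image (fun z => (u, z))) with hF
    have hdisjF : ∀ u₁ ∈ Bf, ∀ u₂ ∈ Bf, u₁ ≠ u₂ →
        Disjoint (((Z u₁).toFinite.toFinset).image (fun z => (u₁, z)))
          (((Z u₂).toFinite.toFinset).image (fun z => (u₂, z))) := by
      intro u₁ _ u₂ _ hne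
      rw [Finset.disjoint_left]
      rintro ⟨a, b⟩ h1 h2
      simp only [Finset.mem_image, Prod.mk.injEq] at h1 h2
      obtain ⟨z1, _, rfl, rfl⟩ := h1
      obtain ⟨z2, _, h2a, _⟩ := h2
      exact hne h2a.symm
    have hFcard : Bf.card * (m - 2) ≤ F.card := by
      rw [hF, Finset.card_biUnion hdisjF]
      have : ∀ u ∈ Bf, m - 2 ≤ (((Z u).toFinite.toFinset).image (fun z => (u, z))).card := by
        intro u hu
        rw [Finset.card_image_of_injective _ (fun a b h => congrArg Prod.snd h)]
        have h1 := hZcard u ((B \ P).toFinite.mem_toFinset.mp hu)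
        rw [Set.ncard_eq_toFinset_card _ (Z u).toFinite] at h1
        omega
      calc Bf.card * (m - 2) = ∑ _u ∈ Bf, (m - 2) := by rw [Finset.sum_const, smul_eq_mul]
        _ ≤ _ := Finset.sum_le_sum this
    have hFsub : F ⊆ NE.toFinite.toFinset := by
      intro p hp
      rw [hF, Finset.mem_biUnion] at hp
      obtain ⟨u, hu, hp⟩ := hp
      simp only [Finset.mem_image] at hp
      obtain ⟨z, hz, rfl⟩ := hp
      rw [Set.Finite.mem_toFinset] at hz ⊢
      have huB : u ∈ B := ((B \ P).toFinite.mem_toFinset.mp hu).1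
      exact ⟨huB.2.2, hz.1.2, hz.2⟩
    have hle2 := Finset.card_le_card hFsub
    have hNEcard : NE.toFinite.toFinset.card = NE.ncard :=
      (Set.ncard_eq_toFinset_card _ NE.toFinite).symm
    have hBfcard : Bf.card = (B \ P).ncard := by
      rw [hBf]; exact (Set.ncard_eq_toFinset_card _ (B \ P).toFinite).symm
    calc (B \ P).ncard * (m - 2) = Bf.card * (m - 2) := by rw [hBfcard]
      _ ≤ F.card := hFcard
      _ ≤ NE.toFinite.toFinset.card := hle2
      _ = NE.ncard := hNEcard
  -- put everything together
  have hBP : B.ncard ≤ (B \ P).ncard + 1 := by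
    have := Set.ncard_diff_add_ncard_of_subset hPsub (Set.toFinite _)
    omega
  by_contra hcon
  push_neg at hcon
  set s : ℝ := Real.sqrt δ with hsdef
  have hs0 : 0 ≤ s := Real.sqrt_nonneg δ
  have hs2 : s ^ 2 = δ := Real.sq_sqrt hδ.le
  have ht2 : 250 ≤ (s * (n : ℝ)) ^ 2 := by
    have : (s * (n : ℝ)) ^ 2 = δ * (n : ℝ) ^ 2 := by rw [mul_pow, hs2]
    nlinarith
  have ht0 : 0 ≤ s * (n : ℝ) := mul_nonneg hs0 hn0
  have h15 : 15 ≤ s * (n : ℝ) := by nlinarith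
  have hbc165 : (165 : ℝ) < (B.ncard : ℝ) := by nlinarith
  have hbcN : 165 < B.ncard := by exact_mod_cast hbc165
  have hmN : 165 < m := by omega
  have hBPN : 164 < (B \ P).ncard := by omega
  -- cast the counting inequality
  have hcountR : ((B \ P).ncard : ℝ) * ((m : ℝ) - 2) ≤ (NE.ncard : ℝ) := by
    have h1 : (((B \ P).ncard * (m - 2) : ℕ) : ℝ) ≤ (NE.ncard : ℝ) := by exact_mod_cast hcount
    rw [Nat.cast_mul, Nat.cast_sub (by omega : 2 ≤ m)] at h1
    exact_mod_cast h1
  have hBPR : (B.ncard : ℝ) - 1 ≤ ((B \ P).ncard : ℝ) := by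
    have : (B.ncard : ℝ) ≤ ((B \ P).ncard : ℝ) + 1 := by exact_mod_cast hBP
    linarith
  have hmR : (B.ncard : ℝ) ≤ (m : ℝ) := by exact_mod_cast hBm
  have hkey : ((B.ncard : ℝ) - 1) * ((B.ncard : ℝ) - 2) ≤ 2 * (s * (n : ℝ)) ^ 2 := by
    have h1 : ((B.ncard : ℝ) - 1) * ((B.ncard : ℝ) - 2)
        ≤ ((B \ P).ncard : ℝ) * ((m : ℝ) - 2) := by
      apply mul_le_mul hBPR (by linarith) (by linarith) (by positivity)
    have h2 : (2 : ℝ) * (s * (n : ℝ)) ^ 2 = 2 * δ * (n : ℝ) ^ 2 := by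
      rw [mul_pow, hs2]; ring
    linarith [hNER]
  nlinarith [hkey, hcon, hbc165, ht2, ht0, sq_nonneg ((B.ncard : ℝ) - 11 * (s * (n : ℝ))),
    mul_pos (show (0:ℝ) < (B.ncard : ℝ) - 11 * (s * (n:ℝ)) by nlinarith)
      (show (0:ℝ) < (B.ncard : ℝ) + 11 * (s * (n:ℝ)) by nlinarith)]


/-- There exist `δ₀ > 0` and `n₀` such that for all `0 < δ ≤ δ₀` and `n ≥ n₀`,
under the Setup with `|D̄| ≤ 8δn`, every `i ∈ {1,2}` and `v ∈ Vᵢ` satisfy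
`|N_G(v) ∩ Dᵢ| ≤ 11√δ·n`. -/
theorem stmt14 : ∃ δ0 : ℝ, 0 < δ0 ∧ ∃ n0 : ℕ,
    ∀ δ : ℝ, 0 < δ → δ ≤ δ0 → ∀ n : ℕ, n0 ≤ n →
    ∀ G : SimpleGraph (Fin n), _root_.Free C4expansion G →
    (∀ u v : Fin n, G.Adj u v → ∃ w : Fin n, G.Adj u w ∧ G.Adj v w) →
    ∀ (x : Fin n) (V1 V2 : Set (Fin n)),
    Disjoint V1 V2 → V1 ∪ V2 = {x}ᶜ →
    (∀ W1 W2 : Set (Fin n), Disjoint W1 W2 → W1 ∪ W2 = {x}ᶜ →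
      crossEdges G W1 W2 ≤ crossEdges G V1 V2) →
    ((n : ℝ) ^ 2 / 4 - 2 * δ * (n : ℝ) ^ 2 ≤ (crossEdges G V1 V2 : ℝ)) →
    ∀ D : Set (Fin n),
    D = {v : Fin n | v ≠ x ∧ G.Adj v x ∧
      (n : ℝ) / 200 ≤ (edgeTriangleDeg G v x : ℝ)} →
    ∀ Dbar : Set (Fin n), Dbar = ({x}ᶜ : Set (Fin n)) \ D →
    ∀ D1 D2 : Set (Fin n), D1 = D ∩ V1 → D2 = D ∩ V2 →
    ((Dbar.ncard : ℝ) ≤ 8 * δ * (n : ℝ)) →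
    ∀ v : Fin n,
      (v ∈ V1 → ((G.neighborSet v ∩ D1).ncard : ℝ) ≤ 11 * Real.sqrt δ * (n : ℝ)) ∧
      (v ∈ V2 → ((G.neighborSet v ∩ D2).ncard : ℝ) ≤ 11 * Real.sqrt δ * (n : ℝ)) := by
  refine ⟨1, one_pos, 2000, ?_⟩
  intro δ hδ _hδ0 n hn G hfree _htri x V1 V2 hdisj hunion hmax hcross D hD Dbar _hDbar
    D1 D2 hD1 hD2 _hDbarcard v
  constructor
  · intro hv
    rw [hD1]
    exact main_aux hn hδ G hfree x V1 V2 hdisj hunion hmax hcross D hD v hv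
  · intro hv
    rw [hD2]
    have hmax' : ∀ W1 W2 : Set (Fin n), Disjoint W1 W2 → W1 ∪ W2 = ({x}ᶜ : Set (Fin n)) →
        crossEdges G W1 W2 ≤ crossEdges G V2 V1 := by
      intro W1 W2 h1 h2
      rw [crossEdges_comm G V2 V1]
      exact hmax W1 W2 h1 h2
    have hcross' : (n : ℝ) ^ 2 / 4 - 2 * δ * (n : ℝ) ^ 2 ≤ (crossEdges G V2 V1 : ℝ) := by
      rw [crossEdges_comm G V2 V1]
      exact hcross
    exact main_aux hn hδ G hfree x V2 V1 hdisj.symm (by rw [Set.union_comm]; exact hunion)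
      hmax' hcross' D hD v hv
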